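/- Let p be a prime and d_1, ..., d_{3p-2} integers none of which is divisible by p. Then there exists a nonempty subset J of {1, ..., 3p-2} with |J| ≤ p such that ∑_{j ∈ J} d_j ≡ 0 (mod p) but ∑_{j ∈ J} d_j ≢ 0 (mod p²). -/

import Mathlib

open Finset Pointwise

namespace S3

variable {ι : Type*} [DecidableEq ι] {p : ℕ}

/-- index set of a gadget -/
def gIdx : ι × Option ι → Finset ι
  | (a, none) => {a}
  | (a, some b) => {a, b}

/-- option set of a gadget -/
def gOpts (f : ι → ZMod p) : ι × Option ι → Finset (ZMod p)
  | (a, none) => {0, f a}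
  | (a, some b) => {0, f a, f b}

/-- weight -/
def gW : ι × Option ι → ℕ
  | (_, none) => 1
  | (_, some _) => 2

def idxs (L : List (ι × Option ι)) : Finset ι := L.foldr (fun g s => gIdx g ∪ s) ∅

def reach (f : ι → ZMod p) : List (ι × Option ι) → Finset (ZMod p)
  | [] => {0}
  | g :: L => reach f L + gOpts f g

/-- a gadget is good if its values are nonzero and distinct -/
def GoodG (f : ι → ZMod p) : ι × Option ι → Prop
  | (a, none) => f a ≠ 0
  | (a, some b) => f a ≠ 0 ∧ f b ≠ 0 ∧ f a ≠ f b ∧ a ≠ b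

lemma zero_mem_gOpts (f : ι → ZMod p) (g : ι × Option ι) : (0 : ZMod p) ∈ gOpts f g := by
  rcases g with ⟨a, _ | b⟩ <;> simp [gOpts]

lemma gOpts_nonempty (f : ι → ZMod p) (g : ι × Option ι) : (gOpts f g).Nonempty :=
  ⟨0, zero_mem_gOpts f g⟩

lemma card_gOpts (f : ι → ZMod p) (g : ι × Option ι) (hg : GoodG f g) :
    (gOpts f g).card = gW g + 1 := by
  rcases g with ⟨a, _ | b⟩
  · simp [gOpts, gW, (hg : f a ≠ 0).symm]
  · obtain ⟨h1, h2, h3, _⟩ := hg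
    rw [gOpts, gW]
    rw [card_insert_of_notMem (by simp [h1.symm, h2.symm]),
      card_insert_of_notMem (by simp [h3]), card_singleton]

lemma reach_nonempty (f : ι → ZMod p) (L : List (ι × Option ι)) : (reach f L).Nonempty := by
  induction L with
  | nil => exact ⟨0, by simp [reach]⟩
  | cons g L ih => exact ih.add (gOpts_nonempty f g)

lemma zero_mem_reach (f : ι → ZMod p) (L : List (ι × Option ι)) : (0 : ZMod p) ∈ reach f L := by
  induction L with
  | nil => simp [reach]
  | cons g L ih =>
      have := add_mem_add ih (zero_mem_gOpts f g)
      simpa [reach] using this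

lemma card_reach (hp : p.Prime) (f : ι → ZMod p) (L : List (ι × Option ι))
    (hL : ∀ g ∈ L, GoodG f g) :
    min p (1 + (L.map gW).sum) ≤ (reach f L).card := by
  induction L with
  | nil => simp [reach]
  | cons g L ih =>
      have hg := hL g (by simp)
      have hrest : ∀ g' ∈ L, GoodG f g' := fun g' hg' => hL g' (by simp [hg'])
      have h1 := ZMod.cauchy_davenport hp (reach_nonempty f L) (gOpts_nonempty f g)
      have h2 := ih hrest
      rw [card_gOpts f g hg] at h1
      rw [reach]
      rcases le_or_gt p (1 + (L.map gW).sum) with h | h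
      · -- already reach L has card ≥ p potentially; min p _ = p
        have : min p ((reach f L).card + (gW g + 1) - 1) = p := by
          have : p ≤ (reach f L).card := le_trans (by omega) h2
          omega
        simp only [List.map_cons, List.sum_cons]
        omega
      · have hcard : 1 + (L.map gW).sum ≤ (reach f L).card := le_trans (by omega) h2
        simp only [List.map_cons, List.sum_cons]
        omega

lemma mem_idxs {L : List (ι × Option ι)} {i : ι} :
    i ∈ idxs L ↔ ∃ g ∈ L, i ∈ gIdx g := by
  induction L with
  | nil => simp [idxs]
  | cons g L ih =>
      simp only [idxs, List.foldr_cons, mem_union, List.mem_cons]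
      constructor
      · rintro (h | h)
        · exact ⟨g, Or.inl rfl, h⟩
        · obtain ⟨g', hg', hi⟩ := ih.1 h
          exact ⟨g', Or.inr hg', hi⟩
      · rintro ⟨g', (rfl | hg'), hi⟩
        · exact Or.inl hi
        · exact Or.inr (ih.2 ⟨g', hg', hi⟩)

/-- decoding: any reachable value is a subset sum with at most one index per gadget -/
lemma reach_decode (f : ι → ZMod p) (L : List (ι × Option ι))
    (hdisj : L.Pairwise (fun g h => Disjoint (gIdx g) (gIdx h)))
    (hgood : ∀ g ∈ L, GoodG f g) : ∀ {v : ZMod p}, v ∈ reach f L →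
    ∃ S : Finset ι, S ⊆ idxs L ∧ S.card ≤ L.length ∧ ∑ i ∈ S, f i = v := by
  induction L with
  | nil =>
      intro v hv
      refine ⟨∅, by simp, by simp, ?_⟩
      simp only [reach, mem_singleton] at hv
      simp [hv.symm]
  | cons g L ih =>
      intro v hv
      rw [reach, Finset.mem_add] at hv
      obtain ⟨u, hu, w, hw, rfl⟩ := hv
      have hd : ∀ g' ∈ L, Disjoint (gIdx g) (gIdx g') := (List.pairwise_cons.1 hdisj).1
      obtain ⟨S, hS, hcard, hsum⟩ := ih (List.pairwise_cons.1 hdisj).2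
        (fun g' h => hgood g' (by simp [h])) hu
      have hSnotin : ∀ i ∈ gIdx g, i ∉ S := by
        intro i hi hiS
        obtain ⟨g', hg', hig'⟩ := mem_idxs.1 (hS hiS)
        exact (Finset.disjoint_left.1 (hd g' hg') hi) hig'
      have hsub : ∀ i ∈ gIdx g, insert i S ⊆ idxs (g :: L) := by
        intro i hi
        intro x hx
        rcases mem_insert.1 hx with rfl | hx
        · exact mem_idxs.2 ⟨g, by simp, hi⟩
        · obtain ⟨g', hg', h⟩ := mem_idxs.1 (hS hx)
          exact mem_idxs.2 ⟨g', by simp [hg'], h⟩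
      have hSsub : S ⊆ idxs (g :: L) := by
        intro x hx
        obtain ⟨g', hg', h⟩ := mem_idxs.1 (hS hx)
        exact mem_idxs.2 ⟨g', by simp [hg'], h⟩
      rcases g with ⟨a, _ | b⟩
      · simp only [gOpts, mem_insert, mem_singleton] at hw
        rcases hw with rfl | rfl
        · exact ⟨S, hSsub, by simpa using Nat.le_succ_of_le hcard, by simp [hsum]⟩
        · refine ⟨insert a S, hsub a (by simp [gIdx]), ?_, ?_⟩
          · rw [card_insert_of_notMem (hSnotin a (by simp [gIdx]))]
            simpa using Nat.succ_le_succ hcard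
          · rw [sum_insert (hSnotin a (by simp [gIdx])), hsum, add_comm]
      · simp only [gOpts, mem_insert, mem_singleton] at hw
        rcases hw with rfl | rfl | rfl
        · exact ⟨S, hSsub, by simpa using Nat.le_succ_of_le hcard, by simp [hsum]⟩
        · refine ⟨insert a S, hsub a (by simp [gIdx]), ?_, ?_⟩
          · rw [card_insert_of_notMem (hSnotin a (by simp [gIdx]))]
            simpa using Nat.succ_le_succ hcard
          · rw [sum_insert (hSnotin a (by simp [gIdx])), hsum, add_comm]
        · refine ⟨insert b S, hsub b (by simp [gIdx]), ?_, ?_⟩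
          · rw [card_insert_of_notMem (hSnotin b (by simp [gIdx]))]
            simpa using Nat.succ_le_succ hcard
          · rw [sum_insert (hSnotin b (by simp [gIdx])), hsum, add_comm]



lemma pairing (f : ι → ZMod p) : ∀ (k : ℕ) (s : Finset ι), 2*k ≤ s.card →
    (∀ c : ZMod p, (s.filter (fun i => f i = c)).card + k ≤ s.card) →
    ∃ L : List (ι × Option ι), L.length = k ∧
      (∀ g ∈ L, ∃ a b, g = (a, some b) ∧ f a ≠ f b ∧ a ≠ b) ∧
      L.Pairwise (fun g h => Disjoint (gIdx g) (gIdx h)) ∧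
      (∀ g ∈ L, gIdx g ⊆ s) := by
  intro k
  induction k with
  | zero => intro s _ _; exact ⟨[], rfl, by simp, by simp, by simp⟩
  | succ k ih =>
      intro s h2 hcap
      have hsne : s.Nonempty := card_pos.1 (by omega)
      have himg : (s.image f).Nonempty := hsne.image f
      obtain ⟨c₁, hc₁mem, hc₁max⟩ := (s.image f).exists_max_image
        (fun c => (s.filter (fun i => f i = c)).card) himg
      set s₂ := s.filter (fun i => f i ≠ c₁) with hs₂def
      have hsplit : (s.filter (fun i => f i = c₁)).card + s₂.card = s.card := by
        simpa [hs₂def] using s.card_filter_add_card_filter_not (p := fun i => f i = c₁)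
      have hs₂ne : s₂.Nonempty := by
        have := hcap c₁
        refine card_pos.1 (by omega)
      obtain ⟨c₂, hc₂mem, hc₂max⟩ := (s₂.image f).exists_max_image
        (fun c => (s₂.filter (fun i => f i = c)).card) (hs₂ne.image f)
      obtain ⟨i, his, hfi⟩ := mem_image.1 hc₁mem
      obtain ⟨j, hjs₂, hfj⟩ := mem_image.1 hc₂mem
      have hjs : j ∈ s := (mem_filter.1 hjs₂).1
      have hc₂ne : c₂ ≠ c₁ := by rw [← hfj]; exact (mem_filter.1 hjs₂).2
      have hij : i ≠ j := fun h => hc₂ne (by rw [← hfj, ← h, hfi])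
      have hfib : ∀ c, c ≠ c₁ → s₂.filter (fun i => f i = c) = s.filter (fun i => f i = c) := by
        intro c hc
        ext x
        simp only [hs₂def, filter_filter, mem_filter]
        constructor
        · rintro ⟨h1, _, h3⟩; exact ⟨h1, h3⟩
        · rintro ⟨h1, h3⟩; exact ⟨h1, by rw [h3]; exact hc, h3⟩
      set s' := (s.erase i).erase j with hs'
      have hjei : j ∈ s.erase i := mem_erase.2 ⟨hij.symm, hjs⟩
      have hcard2 : 2 ≤ s.card := by omega
      have hcard' : s'.card + 2 = s.card := by
        rw [hs', card_erase_of_mem hjei, card_erase_of_mem his]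
        omega
      have hsub' : s' ⊆ s := (erase_subset _ _).trans (erase_subset _ _)
      have his' : i ∉ s' := fun h => (mem_erase.1 (mem_erase.1 h).2).1 rfl
      have hjs' : j ∉ s' := fun h => (mem_erase.1 h).1 rfl
      have hcap' : ∀ c : ZMod p, (s'.filter (fun i => f i = c)).card + k ≤ s'.card := by
        intro c
        have hle : (s'.filter (fun i => f i = c)).card ≤ (s.filter (fun i => f i = c)).card :=
          card_le_card (filter_subset_filter _ hsub')
        by_cases hc1 : c = c₁
        · subst hc1
          have h1 : (s'.filter (fun i => f i = c)) ⊆ (s.filter (fun i => f i = c)).erase i := by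
            intro x hx
            rcases mem_filter.1 hx with ⟨hx1, hx2⟩
            exact mem_erase.2 ⟨fun h => his' (h ▸ hx1), mem_filter.2 ⟨hsub' hx1, hx2⟩⟩
          have h2 : ((s.filter (fun i => f i = c)).erase i).card + 1
              = (s.filter (fun i => f i = c)).card :=
            card_erase_add_one (mem_filter.2 ⟨his, hfi⟩)
          have h3 := card_le_card h1
          have h4 := hcap c
          omega
        by_cases hc2 : c = c₂
        · subst hc2
          have h1 : (s'.filter (fun i => f i = c)) ⊆ (s.filter (fun i => f i = c)).erase j := by
            intro x hx
            rcases mem_filter.1 hx with ⟨hx1, hx2⟩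
            exact mem_erase.2 ⟨fun h => hjs' (h ▸ hx1), mem_filter.2 ⟨hsub' hx1, hx2⟩⟩
          have h2 : ((s.filter (fun i => f i = c)).erase j).card + 1
              = (s.filter (fun i => f i = c)).card :=
            card_erase_add_one (mem_filter.2 ⟨hjs, hfj⟩)
          have h3 := card_le_card h1
          have h4 := hcap c
          omega
        · rcases Nat.eq_zero_or_pos (s.filter (fun i => f i = c)).card with h0 | hpos
          · omega
          have hcmem : c ∈ s.image f := by
            obtain ⟨x, hx⟩ := card_pos.1 hpos
            rcases mem_filter.1 hx with ⟨hx1, hx2⟩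
            exact mem_image.2 ⟨x, hx1, hx2⟩
          have hle1 := hc₁max c hcmem
          have hcmem₂ : c ∈ s₂.image f := by
            obtain ⟨x, hx⟩ := card_pos.1 hpos
            rcases mem_filter.1 hx with ⟨hx1, hx2⟩
            exact mem_image.2 ⟨x, mem_filter.2 ⟨hx1, by rw [hx2]; exact hc1⟩, hx2⟩
          have hle2 : (s.filter (fun i => f i = c)).card
              ≤ (s.filter (fun i => f i = c₂)).card := by
            have := hc₂max c hcmem₂
            rwa [hfib c hc1, hfib c₂ hc₂ne] at this
          have hdisj12 : Disjoint (s.filter (fun i => f i = c₁)) (s.filter (fun i => f i = c₂)) := by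
            refine disjoint_left.2 fun x hx1 hx2 => ?_
            exact hc₂ne ((mem_filter.1 hx2).2.symm.trans (mem_filter.1 hx1).2)
          have hdisj3 : Disjoint (s.filter (fun i => f i = c₁) ∪ s.filter (fun i => f i = c₂))
              (s.filter (fun i => f i = c)) := by
            refine disjoint_left.2 fun x hx1 hx2 => ?_
            rcases mem_union.1 hx1 with h | h
            · exact hc1 ((mem_filter.1 hx2).2.symm.trans (mem_filter.1 h).2)
            · exact hc2 ((mem_filter.1 hx2).2.symm.trans (mem_filter.1 h).2)
          have hsum3 : (s.filter (fun i => f i = c₁)).card + (s.filter (fun i => f i = c₂)).card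
              + (s.filter (fun i => f i = c)).card ≤ s.card := by
            have hsubu : (s.filter (fun i => f i = c₁) ∪ s.filter (fun i => f i = c₂))
                ∪ s.filter (fun i => f i = c) ⊆ s := by
              intro x hx
              rcases mem_union.1 hx with h | h
              · rcases mem_union.1 h with h | h <;> exact (mem_filter.1 h).1
              · exact (mem_filter.1 h).1
            have := card_le_card hsubu
            rwa [card_union_of_disjoint hdisj3, card_union_of_disjoint hdisj12] at this
          omega
      obtain ⟨L, hlen, hshape, hpw, hsubL⟩ := ih s' (by omega) hcap'
      refine ⟨(i, some j) :: L, by simp [hlen], ?_, ?_, ?_⟩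
      · intro g hg
        rcases List.mem_cons.1 hg with rfl | hg
        · exact ⟨i, j, rfl, by rw [hfi, hfj]; exact fun h => hc₂ne h.symm, hij⟩
        · exact hshape g hg
      · refine List.pairwise_cons.2 ⟨fun g hg => ?_, hpw⟩
        have hsubg := hsubL g hg
        refine disjoint_left.2 fun x hx hxg => ?_
        have hxs' := hsubg hxg
        rcases (by simpa [gIdx] using hx : x = i ∨ x = j) with rfl | rfl
        · exact his' hxs'
        · exact hjs' hxs'
      · intro g hg
        rcases List.mem_cons.1 hg with rfl | hg
        · intro x hx
          rcases (by simpa [gIdx] using hx : x = i ∨ x = j) with rfl | rfl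
          · exact his
          · exact hjs
        · exact (hsubL g hg).trans hsub'

lemma sum_gW_pairs : ∀ (L : List (ι × Option ι)),
    (∀ g ∈ L, ∃ a b : ι, g = (a, some b)) → (L.map gW).sum = 2 * L.length
  | [], _ => by simp
  | g :: L, h => by
      obtain ⟨a, b, rfl⟩ := h g (by simp)
      have := sum_gW_pairs L (fun g hg => h g (by simp [hg]))
      simp only [List.map_cons, List.sum_cons, List.length_cons, gW, this]
      ring

lemma sum_gW_singles : ∀ (l : List ι),
    ((l.map (fun a => ((a, none) : ι × Option ι))).map gW).sum = l.length
  | [] => by simp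
  | a :: l => by
      have := sum_gW_singles l
      simp only [List.map_cons, List.sum_cons, List.length_cons, gW, this]
      omega

-- M4 proper:
lemma rep_partial (hp : p.Prime) (f : ι → ZMod p) (s : Finset ι) (hne : ∀ i ∈ s, f i ≠ 0)
    (k : ℕ) (h2 : 2*k ≤ s.card)
    (hcap : ∀ c, (s.filter (fun i => f i = c)).card + k ≤ s.card) :
    ∃ R : Finset (ZMod p), min p (1 + 2*k) ≤ R.card ∧
      ∀ v ∈ R, ∃ S : Finset ι, S ⊆ s ∧ S.card ≤ k ∧ ∑ i ∈ S, f i = v := by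
  obtain ⟨L, hlen, hshape, hpw, hsub⟩ := pairing f k s h2 hcap
  have hgood : ∀ g ∈ L, GoodG f g := by
    intro g hg
    obtain ⟨a, b, rfl, hab, hne'⟩ := hshape g hg
    have ha : a ∈ s := hsub _ hg (by simp [gIdx])
    have hb : b ∈ s := hsub _ hg (by simp [gIdx])
    exact ⟨hne a ha, hne b hb, hab, hne'⟩
  have hwsum : (L.map gW).sum = 2 * L.length :=
    sum_gW_pairs L (fun g hg => by obtain ⟨a, b, rfl, -, -⟩ := hshape g hg; exact ⟨a, b, rfl⟩)
  refine ⟨reach f L, ?_, ?_⟩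
  · have := card_reach hp f L hgood
    rwa [hwsum, hlen] at this
  · intro v hv
    obtain ⟨S, hS, hcard, hsum⟩ := reach_decode f L hpw hgood hv
    refine ⟨S, ?_, hlen ▸ hcard, hsum⟩
    intro x hx
    obtain ⟨g, hg, hxg⟩ := mem_idxs.1 (hS hx)
    exact hsub g hg hxg

lemma rep_exists (hp : p.Prime) (f : ι → ZMod p) (s : Finset ι) (hne : ∀ i ∈ s, f i ≠ 0)
    (k : ℕ) (hcov : p ≤ 2*k+1) (h2 : 2*k ≤ s.card)
    (hcap : ∀ c, (s.filter (fun i => f i = c)).card + k ≤ s.card) (v : ZMod p) :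
    ∃ S : Finset ι, S ⊆ s ∧ S.card ≤ k ∧ ∑ i ∈ S, f i = v := by
  haveI : NeZero p := ⟨hp.ne_zero⟩
  obtain ⟨R, hR, hrep⟩ := rep_partial hp f s hne k h2 hcap
  have hcardu : Fintype.card (ZMod p) = p := ZMod.card p
  have hmin : min p (1 + 2*k) = p := by omega
  rw [hmin] at hR
  have hRuniv : R = univ := by
    apply eq_univ_of_card
    have hle := card_le_univ R
    omega
  exact hrep v (hRuniv ▸ mem_univ v)

/-- singleton version: any subset of card ≥ p - 1 of nonzero values represents everything -/
lemma rep_exists_sub (hp : p.Prime) (f : ι → ZMod p) (s : Finset ι) (hne : ∀ i ∈ s, f i ≠ 0)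
    (hbig : p - 1 ≤ s.card) (v : ZMod p) :
    ∃ S : Finset ι, S ⊆ s ∧ S.card ≤ p - 1 ∧ ∑ i ∈ S, f i = v := by
  obtain ⟨s', hs'sub, hs'card⟩ := s.exists_subset_card_eq hbig
  set L : List (ι × Option ι) := s'.toList.map (fun a => (a, none)) with hL
  have hlen : L.length = p - 1 := by simp [hL, hs'card]
  have hgood : ∀ g ∈ L, GoodG f g := by
    intro g hg
    simp only [hL, List.mem_map] at hg
    obtain ⟨a, ha, rfl⟩ := hg
    exact hne a (hs'sub (mem_toList.1 ha))
  have hpw : L.Pairwise (fun g h => Disjoint (gIdx g) (gIdx h)) := by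
    refine List.Pairwise.map _ ?_ s'.nodup_toList
    intro a b hab
    simp only [gIdx]
    exact Finset.disjoint_singleton.2 hab
  have hw : (L.map gW).sum = L.length := by
    rw [hL]; rw [sum_gW_singles]; simp
  haveI : NeZero p := ⟨hp.ne_zero⟩
  have hcard := card_reach hp f L hgood
  rw [hw, hlen] at hcard
  have hmin : min p (1 + (p - 1)) = p := by
    have := hp.pos; omega
  rw [hmin] at hcard
  have hcardu : Fintype.card (ZMod p) = p := ZMod.card p
  have huniv : reach f L = univ := by
    apply eq_univ_of_card
    have hle := card_le_univ (reach f L)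
    omega
  obtain ⟨S, hS, hcard', hsum⟩ := reach_decode f L hpw hgood (huniv ▸ mem_univ v)
  refine ⟨S, ?_, hlen ▸ hcard', hsum⟩
  intro x hx
  obtain ⟨g, hg, hxg⟩ := mem_idxs.1 (hS hx)
  simp only [hL, List.mem_map] at hg
  obtain ⟨a, ha, rfl⟩ := hg
  have : x = a := by simpa [gIdx] using hxg
  exact this ▸ hs'sub (mem_toList.1 ha)

end S3

open S3 in
set_option maxHeartbeats 1000000 in
theorem stmt_3 (p : ℕ) (hp : p.Prime) (d : Fin (3 * p - 2) → ℤ)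
    (hd : ∀ j, ¬ (p : ℤ) ∣ d j) :
    ∃ J : Finset (Fin (3 * p - 2)), J.Nonempty ∧ J.card ≤ p ∧
      (p : ℤ) ∣ ∑ j ∈ J, d j ∧ ¬ (p : ℤ) ^ 2 ∣ ∑ j ∈ J, d j := by
  classical
  by_contra hcon
  push_neg at hcon
  set r : Fin (3 * p - 2) → ZMod p := fun i => ((d i : ℤ) : ZMod p) with hrdef
  have hr : ∀ i, r i ≠ 0 := by
    intro i h
    exact hd i ((ZMod.intCast_zmod_eq_zero_iff_dvd (d i) p).1 h)
  have hcast : ∀ J : Finset (Fin (3 * p - 2)), ((∑ j ∈ J, d j : ℤ) : ZMod p) = ∑ j ∈ J, r j := by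
    intro J; push_cast [hrdef]; rfl
  -- H in convenient form
  have H : ∀ J : Finset (Fin (3 * p - 2)), J.Nonempty → J.card ≤ p → (∑ j ∈ J, r j) = 0 →
      (p : ℤ)^2 ∣ ∑ j ∈ J, d j := by
    intro J h1 h2 h3
    refine hcon J h1 h2 ?_
    rw [← ZMod.intCast_zmod_eq_zero_iff_dvd, hcast, h3]
  have hN : (univ : Finset (Fin (3 * p - 2))).card = 3 * p - 2 := by simp
  have hp2 : 2 ≤ p := hp.two_le
  -- Claim A
  have claimA : ∀ i j : Fin (3 * p - 2), r i = r j → (p : ℤ)^2 ∣ d i - d j := by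
    intro i j hij
    rcases eq_or_ne i j with rfl | hne
    · simp
    · set pool := (univ.erase i).erase j with hpool
      have hjmem : j ∈ univ.erase i := mem_erase.2 ⟨hne.symm, mem_univ j⟩
      have hpoolcard : pool.card + 2 = 3 * p - 2 := by
        rw [hpool, card_erase_of_mem hjmem, card_erase_of_mem (mem_univ i), hN]
        have : 2 ≤ 3 * p - 2 := by omega
        omega
      have hbig : p - 1 ≤ pool.card := by omega
      obtain ⟨S, hSsub, hScard, hSsum⟩ :=
        rep_exists_sub hp r pool (fun x _ => hr x) hbig (-(r i))
      have hiS : i ∉ S := fun h => (mem_erase.1 (mem_erase.1 (hSsub h)).2).1 rfl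
      have hjS : j ∉ S := fun h => (mem_erase.1 (hSsub h)).1 rfl
      have hJ1 : (p : ℤ)^2 ∣ ∑ x ∈ insert i S, d x := by
        refine H _ (insert_nonempty i S) ?_ ?_
        · rw [card_insert_of_notMem hiS]; omega
        · rw [sum_insert hiS, hSsum]; ring
      have hJ2 : (p : ℤ)^2 ∣ ∑ x ∈ insert j S, d x := by
        refine H _ (insert_nonempty j S) ?_ ?_
        · rw [card_insert_of_notMem hjS]; omega
        · rw [sum_insert hjS, hSsum, ← hij]; ring
      have := dvd_sub hJ1 hJ2
      rwa [sum_insert hiS, sum_insert hjS, add_sub_add_right_eq_sub] at this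
  -- class size cap
  have hpInt : (p : ℤ) ≠ 0 := by exact_mod_cast hp.ne_zero
  have cap : ∀ c : ZMod p, (univ.filter (fun i => r i = c)).card ≤ p - 1 := by
    intro c
    by_contra hcard
    have hple : p ≤ (univ.filter (fun i => r i = c)).card := by omega
    obtain ⟨T, hTsub, hTcard⟩ := (univ.filter (fun i => r i = c)).exists_subset_card_eq hple
    have hTne : T.Nonempty := card_pos.1 (by omega)
    obtain ⟨i₀, hi₀⟩ := hTne
    have hrT : ∀ i ∈ T, r i = c := fun i hi => (mem_filter.1 (hTsub hi)).2
    have hsum0 : ∑ i ∈ T, r i = 0 := by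
      rw [sum_congr rfl hrT, sum_const, hTcard]
      show (p : ℕ) • c = 0
      rw [nsmul_eq_mul]
      simp [ZMod.natCast_self]
    have hdvd := H T ⟨i₀, hi₀⟩ (le_of_eq hTcard) hsum0
    have hsplit : ∑ i ∈ T, d i = (∑ i ∈ T, (d i - d i₀)) + (T.card : ℤ) * d i₀ := by
      rw [sum_sub_distrib, sum_const, nsmul_eq_mul]
      ring
    have hdiff : (p : ℤ)^2 ∣ ∑ i ∈ T, (d i - d i₀) :=
      dvd_sum fun i hi => claimA i i₀ ((hrT i hi).trans (hrT i₀ hi₀).symm)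
    have hpd : (p : ℤ)^2 ∣ (p : ℤ) * d i₀ := by
      have h1 : (p : ℤ)^2 ∣ (T.card : ℤ) * d i₀ := by
        have := dvd_sub hdvd hdiff
        rw [hsplit] at this
        simpa using this
      rwa [hTcard] at h1
    refine hd i₀ ?_
    rw [pow_two] at hpd
    exact (mul_dvd_mul_iff_left hpInt).1 hpd
  -- small p impossible
  haveI : NeZero p := ⟨hp.ne_zero⟩
  have hp5 : 5 ≤ p := by
    by_contra h5
    have hple : p ≤ 4 := by omega
    have hcount : 3 * p - 2 ≤ p * (p - 1) := by
      have h1 : (univ : Finset (Fin (3 * p - 2))).card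
          = ∑ c ∈ (univ : Finset (ZMod p)), (univ.filter (fun i => r i = c)).card :=
        card_eq_sum_card_fiberwise (fun x _ => mem_univ (r x))
      have h2 : ∑ c ∈ (univ : Finset (ZMod p)), (univ.filter (fun i => r i = c)).card
          ≤ ∑ _c ∈ (univ : Finset (ZMod p)), (p - 1) :=
        sum_le_sum fun c _ => cap c
      rw [sum_const, card_univ, ZMod.card, smul_eq_mul] at h2
      omega
    have hp4 : p ≠ 4 := by
      intro h; rw [h] at hp; exact absurd hp (by decide)
    interval_cases p <;> omega
  obtain ⟨t, ht⟩ : ∃ t, p = 2 * t + 1 := by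
    rcases hp.eq_two_or_odd' with h2 | ⟨t, ht⟩
    · omega
    · exact ⟨t, ht⟩
  have ht2 : 2 ≤ t := by omega
  have hcap2t : ∀ c : ZMod p, (univ.filter (fun i => r i = c)).card ≤ 2 * t := by
    intro c; have := cap c; omega
  have hsumall : ∑ c ∈ (univ : Finset (ZMod p)), (univ.filter (fun i => r i = c)).card
      = 3 * p - 2 := by
    rw [← card_eq_sum_card_fiberwise (fun x _ => mem_univ (r x)), hN]
  -- at least 3 classes with ≥ 2 elements
  have hB2card : 3 ≤ ((univ : Finset (ZMod p)).filter
      (fun c => 2 ≤ (univ.filter (fun i => r i = c)).card)).card := by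
    by_contra hB
    set B2 := (univ : Finset (ZMod p)).filter
      (fun c => 2 ≤ (univ.filter (fun i => r i = c)).card) with hB2
    have hble : B2.card ≤ 2 := by omega
    have hA : ∑ c ∈ B2, (univ.filter (fun i => r i = c)).card ≤ B2.card * (2*t) := by
      have := sum_le_card_nsmul B2 (fun c => (univ.filter (fun i => r i = c)).card) (2*t)
        (fun c _ => hcap2t c)
      simpa [smul_eq_mul] using this
    have hBsum : ∑ c ∈ (univ : Finset (ZMod p)).filter
        (fun c => ¬ 2 ≤ (univ.filter (fun i => r i = c)).card),
        (univ.filter (fun i => r i = c)).card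
        ≤ ((univ : Finset (ZMod p)).filter
          (fun c => ¬ 2 ≤ (univ.filter (fun i => r i = c)).card)).card := by
      have := sum_le_card_nsmul ((univ : Finset (ZMod p)).filter
          (fun c => ¬ 2 ≤ (univ.filter (fun i => r i = c)).card))
        (fun c => (univ.filter (fun i => r i = c)).card) 1
        (fun c hc => by
          have h9 := (mem_filter.1 hc).2
          change (univ.filter (fun i => r i = c)).card ≤ 1
          omega)
      simpa using this
    have hcardneg : ((univ : Finset (ZMod p)).filter
        (fun c => ¬ 2 ≤ (univ.filter (fun i => r i = c)).card)).card + B2.card = p := by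
      have h5 := ((univ : Finset (ZMod p))).card_filter_add_card_filter_not
        (p := fun c => 2 ≤ (univ.filter (fun i => r i = c)).card)
      rw [card_univ, ZMod.card, ← hB2] at h5
      omega
    have hsplit : ∑ c ∈ B2, (univ.filter (fun i => r i = c)).card
        + ∑ c ∈ (univ : Finset (ZMod p)).filter
          (fun c => ¬ 2 ≤ (univ.filter (fun i => r i = c)).card),
          (univ.filter (fun i => r i = c)).card
        = 3 * p - 2 := by
      rw [hB2, sum_filter_add_sum_filter_not, hsumall]
    obtain ⟨q, hqq⟩ : ∃ q, B2.card = q := ⟨_, rfl⟩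
    rw [hqq] at hA hcardneg hble
    interval_cases q <;> omega
  obtain ⟨T3, hT3sub, hT3card⟩ := Finset.exists_subset_card_eq hB2card
  obtain ⟨c₁, c₂, c₃, hc12, hc13, hc23, hT3⟩ := Finset.card_eq_three.1 hT3card
  have hcnt : ∀ c ∈ T3, 2 ≤ (univ.filter (fun i => r i = c)).card := by
    intro c hc
    exact (mem_filter.1 (hT3sub hc)).2
  have hpick : ∀ c ∈ T3, ∃ a b : Fin (3 * p - 2), a ≠ b ∧ r a = c ∧ r b = c := by
    intro c hc
    obtain ⟨a, ha, b, hb, hab⟩ := Finset.one_lt_card (s := univ.filter (fun i => r i = c)) |>.1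
      (by have := hcnt c hc; omega)
    exact ⟨a, b, hab, (mem_filter.1 ha).2, (mem_filter.1 hb).2⟩
  obtain ⟨x₁, y₁, hxy₁, hrx₁, hry₁⟩ := hpick c₁ (hT3 ▸ by simp)
  obtain ⟨x₂, y₂, hxy₂, hrx₂, hry₂⟩ := hpick c₂ (hT3 ▸ by simp)
  obtain ⟨x₃, y₃, hxy₃, hrx₃, hry₃⟩ := hpick c₃ (hT3 ▸ by simp)
  set R6 : Finset (Fin (3 * p - 2)) := {x₁, y₁, x₂, y₂, x₃, y₃} with hR6
  have hR6card : R6.card ≤ 6 := by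
    refine le_trans (card_insert_le _ _) ?_
    refine Nat.succ_le_succ (le_trans (card_insert_le _ _) ?_)
    refine Nat.succ_le_succ (le_trans (card_insert_le _ _) ?_)
    refine Nat.succ_le_succ (le_trans (card_insert_le _ _) ?_)
    refine Nat.succ_le_succ (le_trans (card_insert_le _ _) ?_)
    simp
  set Pm : Finset (Fin (3 * p - 2)) := univ \ R6 with hPm
  have hPmcard : 3 * p - 2 - 6 ≤ Pm.card := by
    have h1 : (univ : Finset (Fin (3 * p - 2))).card - R6.card ≤ Pm.card := le_card_sdiff _ _
    omega
  have hPmcap : ∀ c : ZMod p, (Pm.filter (fun i => r i = c)).card + (t-1) ≤ Pm.card := by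
    intro c
    have h1 : (Pm.filter (fun i => r i = c)).card ≤ 2*t :=
      le_trans (card_le_card (filter_subset_filter _ sdiff_subset)) (hcap2t c)
    omega
  obtain ⟨RR, hRRcard, hRRrep⟩ := rep_partial hp r Pm (fun x _ => hr x) (t-1)
    (by omega) hPmcap
  have hmin2 : min p (1 + 2*(t-1)) = 2*t - 1 := by omega
  rw [hmin2] at hRRcard
  -- one of -c₁, -c₂, -c₃ is representable
  have hone : ∃ (c : ZMod p) (x y : Fin (3 * p - 2)), x ≠ y ∧ r x = c ∧ r y = c
      ∧ x ∈ R6 ∧ y ∈ R6 ∧ (-c) ∈ RR := by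
    by_contra hno
    push_neg at hno
    have hsub3 : ({-c₁, -c₂, -c₃} : Finset (ZMod p)) ⊆ univ \ RR := by
      intro z hz
      simp only [mem_insert, mem_singleton] at hz
      refine mem_sdiff.2 ⟨mem_univ z, ?_⟩
      rcases hz with rfl | rfl | rfl
      · exact hno c₁ x₁ y₁ hxy₁ hrx₁ hry₁ (by simp [hR6]) (by simp [hR6])
      · exact hno c₂ x₂ y₂ hxy₂ hrx₂ hry₂ (by simp [hR6]) (by simp [hR6])
      · exact hno c₃ x₃ y₃ hxy₃ hrx₃ hry₃ (by simp [hR6]) (by simp [hR6])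
    have hcard3 : ({-c₁, -c₂, -c₃} : Finset (ZMod p)).card = 3 := by
      rw [card_insert_of_notMem (by
          simp only [mem_insert, mem_singleton, neg_inj]
          rintro (h | h)
          exacts [hc12 h, hc13 h]),
        card_insert_of_notMem (by
          simp only [mem_singleton, neg_inj]
          exact hc23), card_singleton]
    have h5 := card_le_card hsub3
    rw [hcard3, card_sdiff_of_subset (subset_univ RR), card_univ, ZMod.card] at h5
    omega
  obtain ⟨cb, xs, xs', hxsne, hrxs, hrxs', hxsR6, hxs'R6, hcbRR⟩ := hone
  obtain ⟨G, hGsub, hGcard, hGsum⟩ := hRRrep _ hcbRR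
  have hxsG : xs ∉ G := fun h => (mem_sdiff.1 (hGsub h)).2 hxsR6
  have hxs'G : xs' ∉ G := fun h => (mem_sdiff.1 (hGsub h)).2 hxs'R6
  set β : ZMod p := r xs with hβ
  have hβne : β ≠ 0 := hr xs
  -- ============ M8: partition ============
  have hGxs : G ⊆ univ.erase xs := fun x hx => mem_erase.2 ⟨fun h => hxsG (h ▸ hx), mem_univ x⟩
  set U' : Finset (Fin (3*p-2)) := (univ.erase xs) \ G with hU'def
  have hU'sub : U' ⊆ univ.erase xs := sdiff_subset
  have hU'card : U'.card = 6*t - G.card := by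
    rw [hU'def, card_sdiff_of_subset hGxs, card_erase_of_mem (mem_univ xs), hN]
    omega
  have hfibU' : ∀ c : ZMod p, (U'.filter (fun i => r i = c)).card ≤ 2*t :=
    fun c => le_trans (card_le_card (filter_subset_filter _ (hU'sub.trans (erase_subset _ _))))
      (hcap2t c)
  set fullset : Finset (ZMod p) := (univ : Finset (ZMod p)).filter
    (fun c => 2*t ≤ (U'.filter (fun i => r i = c)).card) with hfullset
  have hfull3 : fullset.card ≤ 3 := by
    by_contra hfs
    have h4 : 4 ≤ fullset.card := by omega
    have h1 : U'.card = ∑ c ∈ (univ : Finset (ZMod p)), (U'.filter (fun i => r i = c)).card :=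
      card_eq_sum_card_fiberwise (fun x _ => mem_univ (r x))
    have h2 : ∑ c ∈ fullset, (U'.filter (fun i => r i = c)).card
        ≤ ∑ c ∈ (univ : Finset (ZMod p)), (U'.filter (fun i => r i = c)).card :=
      sum_le_sum_of_subset (subset_univ _)
    have h3 : fullset.card • (2*t) ≤ ∑ c ∈ fullset, (U'.filter (fun i => r i = c)).card :=
      card_nsmul_le_sum _ _ _ (fun c hc => (mem_filter.1 hc).2)
    have h5 : 4*(2*t) ≤ fullset.card * (2*t) := Nat.mul_le_mul_right _ h4
    rw [smul_eq_mul] at h3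
    omega
  have hfullne : ∀ c ∈ fullset, (U'.filter (fun i => r i = c)).Nonempty := by
    intro c hc
    have := (mem_filter.1 hc).2
    exact card_pos.1 (by omega)
  set E : Finset (Fin (3*p-2)) :=
    fullset.attach.image (fun c => (hfullne c.1 c.2).choose) with hE
  have hEcard : E.card ≤ 3 := by
    refine le_trans card_image_le ?_
    rw [card_attach]
    exact hfull3
  set T : Finset (Fin (3*p-2)) := U' \ E with hT
  have hTsub : T ⊆ U' := sdiff_subset
  have hTcard : 5*t - 2 ≤ T.card := by
    have h1 : U'.card - E.card ≤ T.card := le_card_sdiff _ _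
    omega
  have hcapT : ∀ c : ZMod p, (T.filter (fun i => r i = c)).card ≤ 2*t - 1 := by
    intro c
    by_cases hc : c ∈ fullset
    · set e := (hfullne c hc).choose with he
      have hespec := (hfullne c hc).choose_spec
      have heE : e ∈ E := by
        rw [hE]
        exact mem_image_of_mem _ (mem_attach _ ⟨c, hc⟩)
      have hsub2 : T.filter (fun i => r i = c) ⊆ (U'.filter (fun i => r i = c)).erase e := by
        intro x hx
        rcases mem_filter.1 hx with ⟨hx1, hx2⟩
        rcases mem_sdiff.1 hx1 with ⟨hx3, hx4⟩
        exact mem_erase.2 ⟨fun h => hx4 (h ▸ heE), mem_filter.2 ⟨hx3, hx2⟩⟩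
      have h1 := card_le_card hsub2
      rw [card_erase_of_mem hespec] at h1
      have h2 := hfibU' c
      have h3 : 1 ≤ (U'.filter (fun i => r i = c)).card := card_pos.2 ⟨e, hespec⟩
      omega
    · have : ¬ 2*t ≤ (U'.filter (fun i => r i = c)).card := by
        intro h
        exact hc (mem_filter.2 ⟨mem_univ c, h⟩)
      have h1 : (T.filter (fun i => r i = c)).card ≤ (U'.filter (fun i => r i = c)).card :=
        card_le_card (filter_subset_filter _ hTsub)
      omega
  have hxs'U' : xs' ∈ U' := by
    rw [hU'def]
    exact mem_sdiff.2 ⟨mem_erase.2 ⟨hxsne.symm, mem_univ xs'⟩, hxs'G⟩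
  have hβnotfull : β ∉ fullset := by
    intro hβf
    have h1 : U'.filter (fun i => r i = β) ⊆ (univ.filter (fun i => r i = β)).erase xs := by
      intro x hx
      rcases mem_filter.1 hx with ⟨hx1, hx2⟩
      refine mem_erase.2 ⟨fun h => ?_, mem_filter.2 ⟨mem_univ x, hx2⟩⟩
      exact (mem_erase.1 (hU'sub hx1)).1 h
    have h2 := card_le_card h1
    rw [card_erase_of_mem (mem_filter.2 ⟨mem_univ xs, hβ.symm⟩)] at h2
    have h3 := hcap2t β
    have h4 := (mem_filter.1 hβf).2
    omega
  have hxs'T : xs' ∈ T := by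
    refine mem_sdiff.2 ⟨hxs'U', fun hxE => ?_⟩
    rw [hE] at hxE
    obtain ⟨⟨c, hc⟩, -, hcc⟩ := mem_image.1 hxE
    have hspec := (hfullne c hc).choose_spec
    rw [hcc] at hspec
    have hthis : r xs' = c := (mem_filter.1 hspec).2
    have hcβ : c = β := by
      rw [← hthis, hrxs']
      exact hrxs.symm
    exact hβnotfull (hcβ ▸ hc)
  -- choose P_D
  have hT'card : 3*t - 1 ≤ (T.erase xs').card := by
    rw [card_erase_of_mem hxs'T]
    omega
  obtain ⟨T', hT'sub, hT'c⟩ := (T.erase xs').exists_subset_card_eq hT'card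
  have hxs'T' : xs' ∉ T' := fun h => (mem_erase.1 (hT'sub h)).1 rfl
  set PD : Finset (Fin (3*p-2)) := insert xs' T' with hPD
  have hPDsubT : PD ⊆ T := by
    rw [hPD]
    intro x hx
    rcases mem_insert.1 hx with rfl | hx
    · exact hxs'T
    · exact (erase_subset _ _) (hT'sub hx)
  have hPDcard : PD.card = 3*t := by
    rw [hPD, card_insert_of_notMem hxs'T', hT'c]
    omega
  have hcapPD : ∀ c : ZMod p, (PD.filter (fun i => r i = c)).card ≤ 2*t - 1 :=
    fun c => le_trans (card_le_card (filter_subset_filter _ hPDsubT)) (hcapT c)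
  set PC : Finset (Fin (3*p-2)) := (univ.erase xs) \ PD with hPC
  have hPDsub' : PD ⊆ univ.erase xs := hPDsubT.trans (hTsub.trans hU'sub)
  have hPCcard : PC.card = 3*t := by
    rw [hPC, card_sdiff_of_subset hPDsub', card_erase_of_mem (mem_univ xs), hN, hPDcard]
    omega
  have hdisjCD : Disjoint PC PD := sdiff_disjoint
  have hGPC : G ⊆ PC := by
    intro x hx
    refine mem_sdiff.2 ⟨hGxs hx, fun hxPD => ?_⟩
    have : x ∈ U' := hTsub (hPDsubT hxPD)
    exact (mem_sdiff.1 this).2 hx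
  have hxsPC : xs ∉ PC := fun h => (mem_erase.1 (mem_sdiff.1 h).1).1 rfl
  have hxsPD : xs ∉ PD := fun h => (mem_erase.1 (hPDsub' h)).1 rfl
  have hxs'PD : xs' ∈ PD := mem_insert_self _ _
  have hxs'PC : xs' ∉ PC := fun h => (mem_sdiff.1 h).2 hxs'PD
  have hcapPC : ∀ c : ZMod p, (PC.filter (fun i => r i = c)).card ≤ 2*t :=
    fun c => le_trans (card_le_card (filter_subset_filter _
      ((sdiff_subset).trans (erase_subset _ _)))) (hcap2t c)
  -- ============ M9: representation functions ============
  have hrepC : ∀ v : ZMod p, ∃ S : Finset (Fin (3*p-2)),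
      S ⊆ PC ∧ S.card ≤ t ∧ ∑ i ∈ S, r i = v := by
    intro v
    refine rep_exists hp r PC (fun x _ => hr x) t (by omega) (by omega) ?_ v
    intro c
    have := hcapPC c
    omega
  have hrepD : ∀ v : ZMod p, ∃ S : Finset (Fin (3*p-2)),
      S ⊆ PD ∧ S.card ≤ t ∧ ∑ i ∈ S, r i = v := by
    intro v
    refine rep_exists hp r PD (fun x _ => hr x) t (by omega) (by omega) ?_ v
    intro c
    have := hcapPD c
    omega
  have hrepDm : ∃ S : Finset (Fin (3*p-2)),
      S ⊆ PD.erase xs' ∧ S.card ≤ t ∧ ∑ i ∈ S, r i = -β := by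
    refine rep_exists hp r (PD.erase xs') (fun x _ => hr x) t (by omega) ?_ ?_ (-β)
    · rw [card_erase_of_mem hxs'PD, hPDcard]
      omega
    · intro c
      have h1 : ((PD.erase xs').filter (fun i => r i = c)).card
          ≤ (PD.filter (fun i => r i = c)).card :=
        card_le_card (filter_subset_filter _ (erase_subset _ _))
      have h2 := hcapPD c
      rw [card_erase_of_mem hxs'PD, hPDcard]
      omega
  obtain ⟨Sm, hSmsub, hSmcard, hSmsum⟩ := hrepDm
  -- the C-side choice function, with the cheap rep at -β
  set cf : ZMod p → Finset (Fin (3*p-2)) :=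
    fun v => if v = -β then G else (hrepC v).choose with hcf
  have hcfsub : ∀ v, cf v ⊆ PC := by
    intro v
    simp only [hcf]
    split
    · exact hGPC
    · exact (hrepC v).choose_spec.1
  have hcfcard : ∀ v, (cf v).card ≤ t := by
    intro v
    simp only [hcf]
    split
    · omega
    · exact (hrepC v).choose_spec.2.1
  have hcfsum : ∀ v, ∑ i ∈ cf v, r i = v := by
    intro v
    simp only [hcf]
    split
    · next h => rw [hGsum, h, hrxs]
    · exact (hrepC v).choose_spec.2.2
  have hcfm : (cf (-β)).card ≤ t - 1 := by
    simp only [hcf]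
    first
    | exact hGcard
    | (rw [if_pos rfl]; exact hGcard)
  have hdf : ∀ v, ∃ S : Finset (Fin (3*p-2)), S ⊆ PD ∧ S.card ≤ t ∧ ∑ i ∈ S, r i = v := hrepD
  set df : ZMod p → Finset (Fin (3*p-2)) := fun v => (hdf v).choose with hdfdef
  have hdfsub : ∀ v, df v ⊆ PD := fun v => (hdf v).choose_spec.1
  have hdfcard : ∀ v, (df v).card ≤ t := fun v => (hdf v).choose_spec.2.1
  have hdfsum : ∀ v, ∑ i ∈ df v, r i = v := fun v => (hdf v).choose_spec.2.2
  -- ============ M9: the ladder ============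
  haveI : Fact p.Prime := ⟨hp⟩
  set w : ℕ → ZMod p := fun j => (j : ZMod p) * β with hw
  have hwsucc : ∀ j : ℕ, w (j+1) = w j + β := by
    intro j
    simp only [hw]
    push_cast
    ring
  have hwne : ∀ j : ℕ, 1 ≤ j → j ≤ p - 1 → w j ≠ 0 := by
    intro j h1 h2
    have hj : ((j : ℕ) : ZMod p) ≠ 0 := by
      rw [Ne, ZMod.natCast_eq_zero_iff]
      intro hdvd
      have := Nat.le_of_dvd (by omega) hdvd
      omega
    exact mul_ne_zero hj hβne
  have hw1 : w 1 = β := by simp [hw]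
  have hwp1 : w (p-1) = -β := by
    simp only [hw]
    have : ((p - 1 : ℕ) : ZMod p) = -1 := by
      have h1 : ((p - 1 : ℕ) : ZMod p) = (p : ZMod p) - 1 := by
        push_cast [Nat.cast_sub (by omega : 1 ≤ p)]
        ring
      rw [h1, ZMod.natCast_self]
      ring
    rw [this]
    ring
  -- disjointness helpers
  have hdisj1 : ∀ u v : ZMod p, Disjoint (cf u) (df v) :=
    fun u v => hdisjCD.mono (hcfsub u) (hdfsub v)
  have hxsnot : ∀ u v : ZMod p, xs ∉ cf u ∪ df v := by
    intro u v hmem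
    rcases mem_union.1 hmem with h | h
    · exact hxsPC (hcfsub u h)
    · exact hxsPD (hdfsub v h)
  -- the p-2 standard relations
  have hrel : ∀ k ∈ Finset.range (p-2),
      (∑ i ∈ insert xs (cf (w (k+1)) ∪ df (-(w (k+2)))), d i)
      - (∑ i ∈ cf (w (k+2)) ∪ df (-(w (k+2))), d i)
      = d xs + (∑ i ∈ cf (w (k+1)), d i) - (∑ i ∈ cf (w (k+2)), d i) := by
    intro k _
    rw [sum_insert (hxsnot _ _), sum_union (hdisj1 _ _), sum_union (hdisj1 _ _)]
    ring
  have hLdvd : ∀ k ∈ Finset.range (p-2),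
      (p:ℤ)^2 ∣ ∑ i ∈ insert xs (cf (w (k+1)) ∪ df (-(w (k+2)))), d i := by
    intro k hk
    have hkk := Finset.mem_range.1 hk
    refine H _ (insert_nonempty _ _) ?_ ?_
    · refine le_trans (card_insert_le _ _) ?_
      refine le_trans (Nat.succ_le_succ (card_union_le _ _)) ?_
      have := hcfcard (w (k+1))
      have := hdfcard (-(w (k+2)))
      omega
    · rw [sum_insert (hxsnot _ _), sum_union (hdisj1 _ _), hcfsum, hdfsum]
      rw [hwsucc (k+1)]
      rw [← hβ]
      ring
  have hRdvd : ∀ k ∈ Finset.range (p-2),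
      (p:ℤ)^2 ∣ ∑ i ∈ cf (w (k+2)) ∪ df (-(w (k+2))), d i := by
    intro k hk
    have hkk := Finset.mem_range.1 hk
    have hne2 : (cf (w (k+2))).Nonempty := by
      refine nonempty_of_sum_ne_zero (f := r) ?_
      rw [hcfsum]
      exact hwne (k+2) (by omega) (by omega)
    refine H _ (hne2.mono subset_union_left) ?_ ?_
    · refine le_trans (card_union_le _ _) ?_
      have := hcfcard (w (k+2))
      have := hdfcard (-(w (k+2)))
      omega
    · rw [sum_union (hdisj1 _ _), hcfsum, hdfsum]
      ring
  -- merged relation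
  have hxs'not : xs' ∉ cf (-β) ∪ Sm := by
    intro hmem
    rcases mem_union.1 hmem with h | h
    · exact hxs'PC (hcfsub _ h)
    · exact (mem_erase.1 (hSmsub h)).1 rfl
  have hxsnotm : xs ∉ insert xs' (cf (-β) ∪ Sm) := by
    intro hmem
    rcases mem_insert.1 hmem with h | h
    · exact hxsne h
    · rcases mem_union.1 h with h | h
      · exact hxsPC (hcfsub _ h)
      · exact hxsPD ((erase_subset _ _) (hSmsub h))
  have hdisjm : Disjoint (cf (-β)) Sm :=
    hdisjCD.mono (hcfsub _) ((hSmsub).trans (erase_subset _ _))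
  have hdisjm2 : Disjoint (cf β) Sm :=
    hdisjCD.mono (hcfsub _) ((hSmsub).trans (erase_subset _ _))
  have hLmdvd : (p:ℤ)^2 ∣ ∑ i ∈ insert xs (insert xs' (cf (-β) ∪ Sm)), d i := by
    refine H _ (insert_nonempty _ _) ?_ ?_
    · have hc1 := card_insert_le xs (insert xs' (cf (-β) ∪ Sm))
      have hc2 := card_insert_le xs' (cf (-β) ∪ Sm)
      have hc3 := card_union_le (cf (-β)) Sm
      have hc4 := hcfm
      have hc5 := hSmcard
      omega
    · rw [sum_insert hxsnotm, sum_insert hxs'not, sum_union hdisjm, hcfsum, hSmsum]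
      have h1 : r xs' = r xs := by rw [hrxs']; exact hrxs.symm
      rw [h1, ← hβ]
      ring
  have hRmdvd : (p:ℤ)^2 ∣ ∑ i ∈ cf β ∪ Sm, d i := by
    have hne2 : (cf β).Nonempty := by
      refine nonempty_of_sum_ne_zero (f := r) ?_
      rw [hcfsum]
      exact hβne
    refine H _ (hne2.mono subset_union_left) ?_ ?_
    · refine le_trans (card_union_le _ _) ?_
      have := hcfcard β
      have := hSmcard
      omega
    · rw [sum_union hdisjm2, hcfsum, hSmsum]
      ring
  -- assemble V
  set F : ℕ → ℤ := fun j => ∑ i ∈ cf (w j), d i with hF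
  set V : ℤ := (∑ k ∈ Finset.range (p-2),
      ((∑ i ∈ insert xs (cf (w (k+1)) ∪ df (-(w (k+2)))), d i)
        - (∑ i ∈ cf (w (k+2)) ∪ df (-(w (k+2))), d i)))
    + ((∑ i ∈ insert xs (insert xs' (cf (-β) ∪ Sm)), d i) - (∑ i ∈ cf β ∪ Sm, d i)) with hV
  have hVdvd : (p:ℤ)^2 ∣ V := by
    rw [hV]
    refine dvd_add (dvd_sum ?_) (dvd_sub hLmdvd hRmdvd)
    intro k hk
    exact dvd_sub (hLdvd k hk) (hRdvd k hk)
  have hVval : V = ((p : ℤ) - 1) * d xs + d xs' := by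
    rw [hV]
    have h1 : ∑ k ∈ Finset.range (p-2),
        ((∑ i ∈ insert xs (cf (w (k+1)) ∪ df (-(w (k+2)))), d i)
          - (∑ i ∈ cf (w (k+2)) ∪ df (-(w (k+2))), d i))
        = ∑ k ∈ Finset.range (p-2), (d xs + (F (k+1) - F (k+2))) := by
      refine sum_congr rfl ?_
      intro k hk
      rw [hrel k hk]
      simp only [hF]
      ring
    rw [h1, sum_add_distrib, sum_const, card_range]
    have h2 : ∑ k ∈ Finset.range (p-2), (F (k+1) - F (k+2)) = F 1 - F (p-1) := by
      have h3 := Finset.sum_range_sub' (fun k => F (k+1)) (p-2)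
      rw [h3]
      congr 2
      omega
    rw [h2]
    have h4 : ∑ i ∈ insert xs (insert xs' (cf (-β) ∪ Sm)), d i
        = d xs + d xs' + (∑ i ∈ cf (-β), d i) + ∑ i ∈ Sm, d i := by
      rw [sum_insert hxsnotm, sum_insert hxs'not, sum_union hdisjm]
      ring
    have h5 : ∑ i ∈ cf β ∪ Sm, d i = (∑ i ∈ cf β, d i) + ∑ i ∈ Sm, d i :=
      sum_union hdisjm2
    rw [h4, h5]
    have h6 : F 1 = ∑ i ∈ cf β, d i := by rw [hF]; simp only [hw1]
    have h7 : F (p-1) = ∑ i ∈ cf (-β), d i := by rw [hF]; simp only [hwp1]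
    rw [h6, h7]
    have h8 : ((p - 2 : ℕ) : ℤ) = (p : ℤ) - 2 := by
      push_cast [Nat.cast_sub (by omega : 2 ≤ p)]
      ring
    rw [nsmul_eq_mul, h8]
    ring
  -- conclude
  have hsame : r xs' = r xs := by rw [hrxs']; exact hrxs.symm
  have hAA := claimA xs' xs hsame
  have hfinal : (p:ℤ)^2 ∣ (p:ℤ) * d xs := by
    have h9 : (p:ℤ) * d xs = V - (d xs' - d xs) := by
      rw [hVval]; ring
    rw [h9]
    exact dvd_sub hVdvd hAA
  refine hd xs ?_
  rw [pow_two] at hfinal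
  exact (mul_dvd_mul_iff_left hpInt).1 hfinal
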